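/- Let U be an r×r invertible submatrix of an r×n matrix W = (U | V'), r ≤ n, and suppose U has column-wise locally h-maximal volume in W for h ≥ 1. Then U has h̃-maximal volume among all r×r submatrices of W, for h̃ = h^r · r^{r/2}. -/

import Mathlib

open Matrix BigOperators Finset

noncomputable section

/-- `P` is the Moore–Penrose pseudoinverse of `A` (the four Penrose conditions). -/
def Penrose {m n : ℕ} (A : Matrix (Fin m) (Fin n) ℂ) (P : Matrix (Fin n) (Fin m) ℂ) : Prop :=
  A * P * A = A ∧ P * A * P = P ∧ (A * P)ᴴ = A * P ∧ (P * A)ᴴ = P * A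

/-- spectral (l2 operator) norm of a matrix -/
def specNorm {m n : ℕ} (A : Matrix (Fin m) (Fin n) ℂ) : ℝ :=
  ‖LinearMap.toContinuousLinearMap (Matrix.toEuclideanLin A)‖

/-- `σ` lists the singular values of `A` in nonincreasing order, padded with zeros. -/
def IsSVDSeq {m n : ℕ} (A : Matrix (Fin m) (Fin n) ℂ) (σ : ℕ → ℝ) : Prop :=
  Antitone σ ∧ (∀ j, 0 ≤ σ j) ∧ (∀ j, min m n ≤ j → σ j = 0) ∧
  ∃ U : Matrix (Fin m) (Fin m) ℂ, ∃ V : Matrix (Fin n) (Fin n) ℂ,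
    U ∈ Matrix.unitaryGroup (Fin m) ℂ ∧ V ∈ Matrix.unitaryGroup (Fin n) ℂ ∧
    A = U * (Matrix.of fun (i : Fin m) (j : Fin n) => if (i : ℕ) = (j : ℕ) then (σ (i : ℕ) : ℂ) else 0) * Vᴴ

/-- the volume of a matrix: the product of its singular values, i.e.
`√(det (M Mᴴ))` for wide matrices and `√(det (Mᴴ M))` for tall ones. -/
def vol {m n : Type*} [Fintype m] [Fintype n] [DecidableEq m] [DecidableEq n]
    (M : Matrix m n ℂ) : ℝ :=
  if Fintype.card m ≤ Fintype.card n then Real.sqrt (M * Mᴴ).det.re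
  else Real.sqrt (Mᴴ * M).det.re

lemma vol_sq_eq {k : Type*} [Fintype k] [DecidableEq k] (A : Matrix k k ℂ) :
    (if Fintype.card k ≤ Fintype.card k then Real.sqrt (A * Aᴴ).det.re
      else Real.sqrt (Aᴴ * A).det.re) = ‖A.det‖ := by
  rw [if_pos le_rfl, Matrix.det_mul, Matrix.det_conjTranspose, Complex.star_def, Complex.mul_conj, Complex.norm_def]
  norm_num

lemma hadamard_bound {r : ℕ} (M : Matrix (Fin r) (Fin r) ℂ) {c : ℝ} (hc : 0 ≤ c)
    (hM : ∀ i j, ‖M i j‖ ≤ c) :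
    ‖M.det‖ ≤ (Real.sqrt r * c) ^ r := by
  classical
  haveI : WellFoundedLT (Fin r) := ⟨(Fin.Lt.isWellOrder r).toIsWellFounded.wf⟩
  set E := EuclideanSpace ℂ (Fin r)
  have hfr : Module.finrank ℂ E = Fintype.card (Fin r) := by
    simp [E, finrank_euclideanSpace]
  set f : Fin r → E := fun j => (WithLp.equiv 2 (Fin r → ℂ)).symm (fun i => M i j) with hf
  set b := InnerProductSpace.gramSchmidtOrthonormalBasis hfr f with hb
  have hdetb : b.toBasis.det f = ∏ i, inner ℂ (b i) (f i) :=
    InnerProductSpace.gramSchmidtOrthonormalBasis_det hfr f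
  set e := EuclideanSpace.basisFun (Fin r) ℂ with he
  have hMe : e.toBasis.det f = M.det := by
    rw [Module.Basis.det_apply]
    congr 1
  have hchange : e.toBasis.det f = (e.toBasis.det b.toBasis) * (b.toBasis.det f) := by
    rw [Module.Basis.det_apply, Module.Basis.det_apply, Module.Basis.det_apply,
      ← Module.Basis.toMatrix_mul_toMatrix e.toBasis b.toBasis f, Matrix.det_mul]
  have hnorm1 : ‖e.toBasis.det b.toBasis‖ = 1 := by
    have := OrthonormalBasis.det_to_matrix_orthonormalBasis e b
    exact this
  have hfi : ∀ i, ‖f i‖ ≤ Real.sqrt r * c := by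
    intro i
    rw [EuclideanSpace.norm_eq]
    calc Real.sqrt (∑ j, ‖f i j‖ ^ 2) ≤ Real.sqrt (∑ _j : Fin r, c ^ 2) := by
          apply Real.sqrt_le_sqrt
          apply Finset.sum_le_sum
          intro j _
          have := hM j i
          have : ‖f i j‖ ≤ c := by simpa [hf] using hM j i
          nlinarith [norm_nonneg (f i j)]
      _ = Real.sqrt r * c := by
          rw [Finset.sum_const, Finset.card_univ, Fintype.card_fin, nsmul_eq_mul,
            Real.sqrt_mul (by positivity), Real.sqrt_sq hc]
  calc ‖M.det‖ = ‖e.toBasis.det f‖ := by rw [hMe]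
    _ = ‖e.toBasis.det b.toBasis‖ * ‖b.toBasis.det f‖ := by rw [hchange, norm_mul]
    _ = ‖∏ i, (inner ℂ (b i) (f i) : ℂ)‖ := by rw [hnorm1, one_mul, hdetb]
    _ ≤ ∏ i, ‖(inner ℂ (b i) (f i) : ℂ)‖ := norm_prod_le _ _
    _ ≤ ∏ _i : Fin r, (Real.sqrt r * c) := by
        apply Finset.prod_le_prod (fun _ _ => norm_nonneg _)
        intro i _
        calc ‖(inner ℂ (b i) (f i) : ℂ)‖ ≤ ‖b i‖ * ‖f i‖ := norm_inner_le_norm _ _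
          _ ≤ 1 * (Real.sqrt r * c) := by
              apply mul_le_mul (le_of_eq (b.orthonormal.1 i)) (hfi i) (norm_nonneg _)
              norm_num
          _ = Real.sqrt r * c := one_mul _
    _ = (Real.sqrt r * c) ^ r := by simp


/-- From locally h-maximal volume to globally (h^r r^{r/2})-maximal volume. -/
theorem stmt_11 {r s : ℕ} (U : Matrix (Fin r) (Fin r) ℂ) (V' : Matrix (Fin r) (Fin s) ℂ)
    (hU : IsUnit U) (h : ℝ) (hh : 1 ≤ h)
    (hloc : ∀ (j' : Fin r) (j : Fin s),
      vol (Matrix.updateCol U j' (fun i => V' i j)) ≤ h * vol U) :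
    ∀ κ : Fin r ↪ (Fin r ⊕ Fin s),
      vol ((Matrix.fromCols U V').submatrix id ⇑κ)
        ≤ h ^ r * (r : ℝ) ^ ((r : ℝ) / 2) * vol U := by
  intro κ
  have hdetU : IsUnit U.det := (Matrix.isUnit_iff_isUnit_det U).mp hU
  have hUd : U.det ≠ 0 := hdetU.ne_zero
  have hpos : 0 < ‖U.det‖ := norm_pos_iff.mpr hUd
  set W := Matrix.fromCols U V' with hW
  have hvolU : vol U = ‖U.det‖ := vol_sq_eq U
  have hinv : U⁻¹ * W = Matrix.fromCols 1 (U⁻¹ * V') := by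
    rw [hW, Matrix.mul_fromCols, Matrix.nonsing_inv_mul U hdetU]
  have hc : ∀ i j0, ‖(U⁻¹ * V') i j0‖ ≤ h := by
    intro i j0
    have h1 : (U⁻¹ * V') i j0 = U.det⁻¹ * (U.updateCol i (fun k => V' k j0)).det := by
      have e1 : (U⁻¹ * V') i j0 = (U⁻¹ *ᵥ (fun k => V' k j0)) i := rfl
      rw [e1, Matrix.inv_def, Ring.inverse_eq_inv, Matrix.smul_mulVec,
        ← Matrix.cramer_eq_adjugate_mulVec]
      simp [Matrix.cramer_apply]
    rw [h1, norm_mul, norm_inv, inv_mul_eq_div, div_le_iff₀ hpos]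
    have h2 := hloc i j0
    rw [hvolU, show vol (U.updateCol i fun k => V' k j0)
        = ‖(U.updateCol i fun k => V' k j0).det‖ from vol_sq_eq _] at h2
    exact h2
  set N := (U⁻¹ * W).submatrix id ⇑κ with hN
  have hb : ∀ i j, ‖N i j‖ ≤ h := by
    intro i j
    show ‖(U⁻¹ * W) i (κ j)‖ ≤ h
    rw [hinv]
    cases hkj : κ j with
    | inl j0 =>
        rw [Matrix.fromCols_apply_inl]
        by_cases hij : i = j0 <;> simp [Matrix.one_apply, hij] <;> linarith
    | inr j0 =>
        rw [Matrix.fromCols_apply_inr]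
        exact hc i j0
  have hkey : (W.submatrix id ⇑κ) = U * N := by
    have e2 : U * ((U⁻¹ * W).submatrix id ⇑κ) = ((U * (U⁻¹ * W)).submatrix id ⇑κ) := by
      ext i j
      simp [Matrix.mul_apply, Matrix.submatrix_apply]
    rw [hN, e2, ← Matrix.mul_assoc, Matrix.mul_nonsing_inv U hdetU, Matrix.one_mul]
  have hvolS : vol (W.submatrix id ⇑κ)
      = ‖U.det‖ * ‖N.det‖ := by
    rw [show vol (W.submatrix id ⇑κ) = ‖(W.submatrix id ⇑κ).det‖ from vol_sq_eq _,
      hkey, Matrix.det_mul, norm_mul]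
  have hHad := hadamard_bound N (le_trans zero_le_one hh) hb
  have hsq : (Real.sqrt r) ^ r = (r : ℝ) ^ ((r : ℝ) / 2) := by
    rw [Real.sqrt_eq_rpow, ← Real.rpow_natCast ((r:ℝ) ^ (1/2 : ℝ)) r,
      ← Real.rpow_mul (Nat.cast_nonneg r)]
    congr 1
    ring
  calc vol (W.submatrix id ⇑κ) = ‖U.det‖ * ‖N.det‖ := hvolS
    _ ≤ ‖U.det‖ * (Real.sqrt r * h) ^ r := by
        exact mul_le_mul_of_nonneg_left hHad (le_of_lt hpos)
    _ = h ^ r * (r : ℝ) ^ ((r : ℝ) / 2) * vol U := by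
        rw [mul_pow, hsq, hvolU]; ring
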